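/- Resolvent estimate: let H be a complex Hilbert space, A : D(A) → H linear with |⟨Av, v⟩| ≤ λ Re⟨Av, v⟩ for all v ∈ D(A), λ ≥ 1. Let 0 < φ < arcsin(1/λ) and z ∈ ℂ \ {0} with |arg z| ≤ π/2 + φ. If w ∈ D(A) and v ∈ H satisfy (z + A)w = z v, then ‖w‖ ≤ (1/λ + 1)/(1/λ - sin φ) · ‖v‖. -/

import Mathlib

/-- Resolvent estimate: under the sector bound `|⟨Av,v⟩| ≤ λ Re⟨Av,v⟩`, for
`0 < φ < arcsin(1/λ)` and `z ≠ 0` with `|arg z| ≤ π/2 + φ`, the relation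
`(z + A) w = z v` implies `‖w‖ ≤ (1/λ + 1)/(1/λ - sin φ) ‖v‖`. -/
theorem resolvent_estimate {H : Type*} [NormedAddCommGroup H] [InnerProductSpace ℂ H]
    (Dom : Submodule ℂ H) (A : Dom →ₗ[ℂ] H) (lam φ : ℝ) (hlam : 1 ≤ lam)
    (hA : ∀ v : Dom, ‖(inner ℂ (A v) (v : H) : ℂ)‖ ≤ lam * (inner ℂ (A v) (v : H) : ℂ).re)
    (hφ0 : 0 < φ) (hφ : φ < Real.arcsin (1 / lam))
    (z : ℂ) (hz : z ≠ 0) (harg : |z.arg| ≤ Real.pi / 2 + φ)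
    (w : Dom) (v : H) (heq : z • (w : H) + A w = z • v) :
    ‖(w : H)‖ ≤ (1 / lam + 1) / (1 / lam - Real.sin φ) * ‖v‖ := by
  have hlam0 : (0:ℝ) < lam := lt_of_lt_of_le one_pos hlam
  have hinv1 : 1 / lam ≤ 1 := by rw [div_le_one hlam0]; exact hlam
  have hinv0 : 0 < 1 / lam := by positivity
  have hφ2 : φ ≤ Real.pi / 2 := le_of_lt (lt_of_lt_of_le hφ (Real.arcsin_le_pi_div_two _))
  have hs : Real.sin φ < 1 / lam := by
    have h := Real.sin_lt_sin_of_lt_of_le_pi_div_two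
      (by linarith [Real.pi_pos] : -(Real.pi/2) ≤ φ) (Real.arcsin_le_pi_div_two _) hφ
    rwa [Real.sin_arcsin (by linarith) hinv1] at h
  set s := Real.sin φ with hsdef
  have hspos : 0 < 1 / lam - s := by linarith
  set nw := ‖(w : H)‖ with hnw
  set nv := ‖v‖ with hnv
  set r := ‖z‖ with hr
  have hr0 : 0 < r := norm_pos_iff.mpr hz
  -- lower bound on Re z
  have hcos : -s * r ≤ z.re := by
    have h1 : Real.cos (Real.pi / 2 + φ) ≤ Real.cos |z.arg| :=
      Real.cos_le_cos_of_nonneg_of_le_pi (abs_nonneg _)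
        (by linarith [Real.pi_pos]) harg
    rw [Real.cos_abs] at h1
    have h1' : -s ≤ Real.cos z.arg := by
      rw [Real.cos_add, Real.cos_pi_div_two, Real.sin_pi_div_two] at h1
      rw [hsdef]; linarith
    have h2 : Real.cos z.arg = z.re / r := Complex.cos_arg hz
    rw [h2] at h1'
    calc -s * r ≤ (z.re / r) * r := mul_le_mul_of_nonneg_right h1' hr0.le
      _ = z.re := by field_simp
  -- A w = z • (v - w)
  have hAw : A w = z • v - z • (w : H) := by
    rw [eq_sub_iff_add_eq, add_comm]; exact heq
  set u : ℂ := inner ℂ v (w : H) with hu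
  have hα : (inner ℂ (A w) ((w : H)) : ℂ) = (starRingEnd ℂ) z * (u - (nw : ℂ)^2) := by
    rw [hAw, inner_sub_left, inner_smul_left, inner_smul_left,
      inner_self_eq_norm_sq_to_K, mul_sub]
    rfl
  have hunorm : ‖u‖ ≤ nv * nw := norm_inner_le_norm v (w : H)
  have habs : r * (nw^2 - nv*nw) ≤ ‖(inner ℂ (A w) ((w : H)) : ℂ)‖ := by
    rw [hα, norm_mul]
    have h1 : ‖(starRingEnd ℂ) z‖ = r := by simp [hr]
    rw [h1]
    apply mul_le_mul_of_nonneg_left _ hr0.le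
    have h2 := norm_sub_norm_le ((nw:ℂ)^2) u
    rw [norm_sub_rev] at h2
    have h3 : ‖(nw:ℂ)^2‖ = nw^2 := by
      rw [norm_pow]; norm_num [abs_of_nonneg (norm_nonneg (w:H))]
    linarith
  have hre : ((inner ℂ (A w) ((w : H)) : ℂ)).re = z.re * (u.re - nw^2) + z.im * u.im := by
    rw [hα]
    have h4 : ((nw:ℂ)^2) = ((nw^2 : ℝ) : ℂ) := by push_cast; ring
    rw [h4, Complex.mul_re, Complex.conj_re, Complex.conj_im, Complex.sub_re, Complex.sub_im,
      Complex.ofReal_re, Complex.ofReal_im]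
    ring
  have hkey := hA w
  rw [hre] at hkey
  have h1 : r * (nw^2 - nv*nw) ≤ lam * (z.re * (u.re - nw^2) + z.im * u.im) :=
    le_trans habs hkey
  have h2 : z.re * u.re + z.im * u.im ≤ r * (nv * nw) := by
    have ha : z.re * u.re + z.im * u.im = ((starRingEnd ℂ) z * u).re := by
      rw [Complex.mul_re, Complex.conj_re, Complex.conj_im]; ring
    have hb : ((starRingEnd ℂ) z * u).re ≤ ‖(starRingEnd ℂ) z * u‖ := Complex.re_le_norm _
    have hc : ‖(starRingEnd ℂ) z * u‖ = r * ‖u‖ := by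
      rw [norm_mul]; simp [hr]
    rw [ha]
    calc ((starRingEnd ℂ) z * u).re ≤ r * ‖u‖ := by rw [← hc]; exact hb
      _ ≤ r * (nv * nw) := mul_le_mul_of_nonneg_left hunorm hr0.le
  have key : (1/lam - s) * nw^2 ≤ (1/lam + 1) * (nv * nw) := by
    have h3 : lam * (z.re * (u.re - nw^2) + z.im * u.im)
        = lam * (z.re * u.re + z.im * u.im) - lam * z.re * nw^2 := by ring
    rw [h3] at h1
    have h4 : lam * (z.re * u.re + z.im * u.im) ≤ lam * (r * (nv * nw)) :=
      mul_le_mul_of_nonneg_left h2 hlam0.le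
    have h5 : lam * (-(s*r)) * nw^2 ≤ lam * z.re * nw^2 := by
      apply mul_le_mul_of_nonneg_right _ (sq_nonneg nw)
      apply mul_le_mul_of_nonneg_left _ hlam0.le
      linarith
    have h6 : r * (nw^2 - nv*nw) ≤ lam * r * (nv*nw) + lam * s * r * nw^2 := by nlinarith
    have h7 : r * ((1 - lam*s) * nw^2) ≤ r * ((1 + lam) * (nv*nw)) := by nlinarith
    have h8 : (1 - lam*s) * nw^2 ≤ (1 + lam) * (nv*nw) :=
      le_of_mul_le_mul_left (by linarith) hr0
    have h9 : (1/lam - s) * nw^2 = (1/lam) * ((1 - lam*s) * nw^2) := by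
      field_simp
    have h10 : (1/lam + 1) * (nv*nw) = (1/lam) * ((1 + lam) * (nv*nw)) := by
      field_simp
    rw [h9, h10]
    exact mul_le_mul_of_nonneg_left h8 hinv0.le
  rcases eq_or_lt_of_le (norm_nonneg (w:H)) with h0 | h0
  · rw [hnw, ← h0]
    positivity
  · have h0' : 0 < nw := by rw [hnw]; exact h0
    rw [div_mul_eq_mul_div, le_div_iff₀ hspos]
    have h11 : (nw * (1/lam - s)) * nw ≤ ((1/lam + 1) * nv) * nw := by
      calc (nw * (1/lam - s)) * nw = (1/lam - s) * nw^2 := by ring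
        _ ≤ (1/lam + 1) * (nv * nw) := key
        _ = ((1/lam + 1) * nv) * nw := by ring
    exact le_of_mul_le_mul_right h11 h0'
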